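/- Let G be a digraph with no negative-weight cycles (integer weights), s a source vertex, T a spanning tree rooted at s, and for each vertex v let d_{w,T}(v) be the weight of the s→v path in T and d_w(v) the shortest-path distance. If p ∈ ℝⁿ satisfies w(i,j) + p_i - p_j ≥ -ε for all edges (i,j), and T is a shortest-path tree for the weights w(i,j) + p_i - p_j + ε, then for every v, d_{w,T}(v) - d_w(v) ≤ εn. -/

import Mathlib

open Finset

/-- A directed cycle: a nonempty list of distinct vertices whose consecutive
pairs (cyclically) are edges of `E`. -/
def IsCycle {n : ℕ} (E : Finset (Fin n × Fin n)) (c : List (Fin n)) : Prop :=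
  c ≠ [] ∧ c.Nodup ∧ ∀ p ∈ c.zip (c.rotate 1), p ∈ E

/-- Mean weight of a cycle. -/
noncomputable def meanWeight {n : ℕ} (w : Fin n × Fin n → ℝ) (c : List (Fin n)) : ℝ :=
  ((c.zip (c.rotate 1)).map w).sum / c.length

/-- Min-mean-cycle value of the digraph `(V, E, w)`. -/
noncomputable def mmc {n : ℕ} (E : Finset (Fin n × Fin n)) (w : Fin n × Fin n → ℝ) : ℝ :=
  sInf {x : ℝ | ∃ c, IsCycle E c ∧ meanWeight w c = x}

/-- Membership in `Δ_E`: a nonnegative matrix supported on `E` with total sum 1. -/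
def InDeltaE {n : ℕ} (E : Finset (Fin n × Fin n)) (P : Matrix (Fin n) (Fin n) ℝ) : Prop :=
  (∀ i j, 0 ≤ P i j) ∧ (∀ i j, (i, j) ∉ E → P i j = 0) ∧ (∑ i, ∑ j, P i j) = 1

/-- A circulation: netflow is balanced at every vertex. -/
def IsBalanced {n : ℕ} (P : Matrix (Fin n) (Fin n) ℝ) : Prop :=
  ∀ i, (∑ j, P i j) = ∑ j, P j i

/-- Total netflow imbalance `‖P𝟏 - Pᵀ𝟏‖₁`. -/
noncomputable def imb {n : ℕ} (P : Matrix (Fin n) (Fin n) ℝ) : ℝ :=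
  ∑ i, |(∑ j, P i j) - ∑ j, P j i|

/-- Entrywise ℓ₁ norm of a matrix. -/
noncomputable def l1 {n : ℕ} (P : Matrix (Fin n) (Fin n) ℝ) : ℝ :=
  ∑ i, ∑ j, |P i j|

/-- There is a directed path from `i` to `j` of length at most `d`. -/
def ConnectsWithin {n : ℕ} (E : Finset (Fin n × Fin n)) (d : ℕ) (i j : Fin n) : Prop :=
  ∃ l : List (Fin n), l.length ≤ d ∧ List.Chain (fun a b => (a, b) ∈ E) i l ∧
    (i :: l).getLast (List.cons_ne_nil _ _) = j

/-- A directed walk from `s` to `v` along edges of `E`, recorded by its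
list of vertices after `s`. -/
def IsWalkFrom {n : ℕ} (E : Finset (Fin n × Fin n)) (s v : Fin n) (l : List (Fin n)) : Prop :=
  List.Chain (fun a b => (a, b) ∈ E) s l ∧ (s :: l).getLast (List.cons_ne_nil _ _) = v

/-- Weight of a walk. -/
noncomputable def walkWeight {n : ℕ} (w : Fin n × Fin n → ℝ) (s : Fin n) (l : List (Fin n)) : ℝ :=
  (((s :: l).zip l).map w).sum

namespace AuxSSSP

variable {α : Type*}

def pairs (L : List α) : List (α × α) := L.zip L.tail

lemma pairs_cons_cons (a b : α) (l : List α) :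
    pairs (a :: b :: l) = (a, b) :: pairs (b :: l) := rfl

lemma zip_append_left : ∀ (l₁ l₂ t : List α), l₂.length ≤ l₁.length →
    (l₁ ++ t).zip l₂ = l₁.zip l₂ := by
  intro l₁
  induction l₁ with
  | nil =>
    intro l₂ t h
    have : l₂ = [] := List.eq_nil_of_length_eq_zero (Nat.le_zero.mp h)
    simp [this]
  | cons a l₁ ih =>
    intro l₂ t h
    cases l₂ with
    | nil => simp
    | cons b l₂ =>
      simp only [List.cons_append, List.zip_cons_cons]
      rw [ih l₂ t (by simpa using h)]

lemma pairs_append (x : α) (Q : List α) :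
    ∀ (A : List α), pairs (A ++ x :: Q) = pairs (A ++ [x]) ++ pairs (x :: Q) := by
  intro A
  induction A with
  | nil => simp [pairs]
  | cons a A ih =>
    cases A with
    | nil => simp [pairs_cons_cons, pairs]
    | cons b A' =>
      simp only [List.cons_append] at ih ⊢
      rw [pairs_cons_cons, pairs_cons_cons, ih, List.cons_append]

lemma pairs_mem_of_chain' {R : α → α → Prop} :
    ∀ {L : List α}, List.Chain' R L → ∀ p ∈ pairs L, R p.1 p.2 := by
  intro L
  induction L with
  | nil => intro _ p hp; simp [pairs] at hp
  | cons a t ih =>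
    cases t with
    | nil => intro _ p hp; simp [pairs] at hp
    | cons b t' =>
      intro h p hp
      rw [pairs_cons_cons] at hp
      rcases List.mem_cons.mp hp with h1 | h2
      · subst h1; exact (List.isChain_cons_cons.mp h).1
      · exact ih (List.isChain_cons_cons.mp h).2 p h2

lemma find_dup [DecidableEq α] :
    ∀ (L : List α), ¬ L.Nodup →
      ∃ A x B C, L = A ++ x :: (B ++ x :: C) ∧ (x :: B).Nodup := by
  intro L
  induction L with
  | nil => intro h; exact absurd List.nodup_nil h
  | cons a t ih =>
    intro h
    by_cases ht : t.Nodup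
    · have ha : a ∈ t := by
        by_contra ha
        exact h (List.nodup_cons.mpr ⟨ha, ht⟩)
      obtain ⟨B, C, rfl⟩ := List.append_of_mem ha
      refine ⟨[], a, B, C, by simp, ?_⟩
      have hB := (List.nodup_append.mp ht).1
      have haB : a ∉ B := by
        intro hmem
        exact (List.nodup_append'.mp ht).2.2 hmem List.mem_cons_self
      exact List.nodup_cons.mpr ⟨haB, hB⟩
    · obtain ⟨A, x, B, C, hEq, hnd⟩ := ih ht
      exact ⟨a :: A, x, B, C, by simp [hEq], hnd⟩

/-- the cycle sum in `IsCycle` form equals the pairs-sum of `c ++ [c.head]`. -/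
lemma cycle_sum_eq {n : ℕ} (w : Fin n × Fin n → ℝ) (x : Fin n) (B : List (Fin n)) :
    ((( x :: B).zip ((x :: B).rotate 1)).map w).sum
      = ((pairs ((x :: B) ++ [x])).map w).sum := by
  have hrot : (x :: B).rotate 1 = B ++ [x] := by
    rw [List.rotate_cons_succ, List.rotate_zero]
  rw [hrot]
  have : pairs ((x :: B) ++ [x]) = (x :: B).zip (B ++ [x]) := by
    unfold pairs
    have h1 : ((x :: B) ++ [x]).tail = B ++ [x] := by simp
    rw [h1]
    exact zip_append_left (x :: B) (B ++ [x]) [x] (by simp)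
  rw [this]

lemma shorten {n : ℕ} (E : Finset (Fin n × Fin n)) (w : Fin n × Fin n → ℝ)
    (hnoneg : ∀ c, IsCycle E c → 0 ≤ ((c.zip (c.rotate 1)).map w).sum) :
    ∀ (N : ℕ) (L : List (Fin n)), L.length ≤ N → L ≠ [] →
      L.Chain' (fun a b => (a, b) ∈ E) →
      ∃ L', L' ≠ [] ∧ L'.Nodup ∧ L'.Chain' (fun a b => (a, b) ∈ E) ∧
        L'.head? = L.head? ∧ L'.getLast? = L.getLast? ∧
        ((pairs L').map w).sum ≤ ((pairs L).map w).sum := by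
  intro N
  induction N with
  | zero =>
    intro L hlen hne _
    exact absurd (List.eq_nil_of_length_eq_zero (Nat.le_zero.mp hlen)) hne
  | succ N ih =>
    intro L hlen hne hch
    by_cases hnd : L.Nodup
    · exact ⟨L, hne, hnd, hch, rfl, rfl, le_rfl⟩
    · obtain ⟨A, x, B, C, hEq, hndc⟩ := find_dup L hnd
      subst hEq
      -- split chain
      have hch1 : List.Chain' (fun a b => (a, b) ∈ E) (A ++ [x]) ∧
          List.Chain' (fun a b => (a, b) ∈ E) (x :: (B ++ x :: C)) :=
        List.isChain_split.mp hch
      have hch2 : List.Chain' (fun a b => (a, b) ∈ E) ((x :: B) ++ [x]) ∧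
          List.Chain' (fun a b => (a, b) ∈ E) (x :: C) := by
        have := hch1.2
        rw [show x :: (B ++ x :: C) = (x :: B) ++ x :: C by simp] at this
        exact List.isChain_split.mp this
      have hchL2 : List.Chain' (fun a b => (a, b) ∈ E) (A ++ x :: C) :=
        List.isChain_split.mpr ⟨hch1.1, hch2.2⟩
      -- cycle nonneg
      have hcyc : IsCycle E (x :: B) := by
        refine ⟨List.cons_ne_nil _ _, hndc, ?_⟩
        intro q hq
        have hrot : (x :: B).rotate 1 = B ++ [x] := by
          rw [List.rotate_cons_succ, List.rotate_zero]
        rw [hrot] at hq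
        have hq' : q ∈ pairs ((x :: B) ++ [x]) := by
          unfold pairs
          have h1 : ((x :: B) ++ [x]).tail = B ++ [x] := by simp
          rw [h1, zip_append_left (x :: B) (B ++ [x]) [x] (by simp)]
          exact hq
        exact pairs_mem_of_chain' hch2.1 q hq'
      have hcw : 0 ≤ ((pairs ((x :: B) ++ [x])).map w).sum := by
        rw [← cycle_sum_eq]
        exact hnoneg _ hcyc
      -- weight comparison
      have hWsplit : ((pairs (A ++ x :: (B ++ x :: C))).map w).sum
          = ((pairs (A ++ [x])).map w).sum
            + (((pairs ((x :: B) ++ [x])).map w).sum + ((pairs (x :: C)).map w).sum) := by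
        rw [pairs_append x (B ++ x :: C) A]
        rw [show (x :: (B ++ x :: C)) = (x :: B) ++ x :: C by simp]
        rw [pairs_append x C (x :: B)]
        simp [add_assoc]
      have hW2 : ((pairs (A ++ x :: C)).map w).sum
          = ((pairs (A ++ [x])).map w).sum + ((pairs (x :: C)).map w).sum := by
        rw [pairs_append x C A]; simp
      have hWle : ((pairs (A ++ x :: C)).map w).sum
          ≤ ((pairs (A ++ x :: (B ++ x :: C))).map w).sum := by
        rw [hWsplit, hW2]; linarith
      -- lengths
      have hlen2 : (A ++ x :: C).length ≤ N := by
        have := hlen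
        simp only [List.length_append, List.length_cons] at this ⊢
        omega
      obtain ⟨L', h1, h2, h3, h4, h5, h6⟩ := ih (A ++ x :: C) hlen2 (by simp) hchL2
      refine ⟨L', h1, h2, h3, ?_, ?_, le_trans h6 hWle⟩
      · rw [h4]
        cases A with
        | nil => simp
        | cons a A' => simp
      · rw [h5]
        rw [show A ++ x :: (B ++ x :: C) = (A ++ x :: B) ++ (x :: C) by simp]
        rw [List.getLast?_append_of_ne_nil (A ++ x :: B) (List.cons_ne_nil x C),
          List.getLast?_append_of_ne_nil A (List.cons_ne_nil x C)]

end AuxSSSP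


namespace AuxSSSP

lemma walkWeight_eq_pairs {n : ℕ} (w : Fin n × Fin n → ℝ) (s : Fin n) (l : List (Fin n)) :
    walkWeight w s l = ((pairs (s :: l)).map w).sum := rfl

lemma telescope {n : ℕ} (w : Fin n × Fin n → ℝ) (p : Fin n → ℝ) (ε : ℝ) :
    ∀ (l : List (Fin n)) (s : Fin n),
      walkWeight (fun e => w e + p e.1 - p e.2 + ε) s l
        = walkWeight w s l + p s - p ((s :: l).getLast (List.cons_ne_nil _ _))
          + ε * l.length := by
  intro l
  induction l with
  | nil => intro s; simp [walkWeight]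
  | cons b t ih =>
    intro s
    have h1 : ∀ (f : Fin n × Fin n → ℝ), walkWeight f s (b :: t) = f (s, b) + walkWeight f b t := by
      intro f; simp [walkWeight]
    rw [h1, h1, ih b]
    have hlast : (s :: b :: t).getLast (List.cons_ne_nil _ _)
        = (b :: t).getLast (List.cons_ne_nil _ _) := List.getLast_cons _
    rw [hlast]
    simp only [List.length_cons]
    push_cast
    ring

end AuxSSSP

/-- **Approximate shortest-path trees from approximate potentials.** Let `G` have
integer weights and no negative cycles, `s` a source, and for each vertex `v` let
`tpath v` be the (simple) `s → v` path of a spanning tree `T` rooted at `s`. If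
`w(i,j) + p_i - p_j ≥ -ε` on every edge and `T` is a shortest-path tree for the
weights `w(i,j) + p_i - p_j + ε`, then `d_{w,T}(v) - d_w(v) ≤ ε n` for every `v`. -/
theorem approx_sssp_tree {n : ℕ} (E : Finset (Fin n × Fin n))
    (w : Fin n × Fin n → ℤ) (s : Fin n) (p : Fin n → ℝ) (ε : ℝ) (hε : 0 ≤ ε)
    (hnoneg : ∀ c, IsCycle E c → 0 ≤ ((c.zip (c.rotate 1)).map w).sum)
    (tpath : Fin n → List (Fin n))
    (htree : ∀ v, IsWalkFrom E s v (tpath v) ∧ (s :: tpath v).Nodup)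
    (hp : ∀ e ∈ E, -ε ≤ (w e : ℝ) + p e.1 - p e.2)
    (hT : ∀ v, ∀ l, IsWalkFrom E s v l →
      walkWeight (fun e => (w e : ℝ) + p e.1 - p e.2 + ε) s (tpath v)
        ≤ walkWeight (fun e => (w e : ℝ) + p e.1 - p e.2 + ε) s l) :
    ∀ v : Fin n,
      walkWeight (fun e => (w e : ℝ)) s (tpath v)
          - sInf {r : ℝ | ∃ l, IsWalkFrom E s v l ∧ walkWeight (fun e => (w e : ℝ)) s l = r}
        ≤ ε * n := by
  intro v
  set wR : Fin n × Fin n → ℝ := fun e => (w e : ℝ) with hwR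
  have hnonegR : ∀ c, IsCycle E c → 0 ≤ ((c.zip (c.rotate 1)).map wR).sum := by
    intro c hc
    have h := hnoneg c hc
    have : ((c.zip (c.rotate 1)).map wR).sum
        = (((c.zip (c.rotate 1)).map w).sum : ℤ) := by
      rw [Int.cast_list_sum, List.map_map]; rfl
    rw [this]
    exact_mod_cast h
  set S := {r : ℝ | ∃ l, IsWalkFrom E s v l ∧ walkWeight wR s l = r} with hS
  have hSne : S.Nonempty := ⟨walkWeight wR s (tpath v), tpath v, (htree v).1, rfl⟩
  have hlb : ∀ r ∈ S, walkWeight wR s (tpath v) - ε * n ≤ r := by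
    rintro r ⟨l, hl, rfl⟩
    -- shorten the walk s :: l
    have hch : List.Chain' (fun a b => (a, b) ∈ E) (s :: l) := hl.1
    obtain ⟨L', hne, hnd, hch', hhead, hlast, hW⟩ :=
      AuxSSSP.shorten E wR hnonegR (s :: l).length (s :: l) le_rfl
        (List.cons_ne_nil _ _) hch
    have hheads : L'.head? = some s := by rw [hhead]; rfl
    have hL' : s :: L'.tail = L' := List.cons_head?_tail hheads
    set l' := L'.tail with hl'
    have hwalk : IsWalkFrom E s v l' := by
      constructor
      · have : List.Chain' (fun a b => (a, b) ∈ E) (s :: l') := by rw [hL']; exact hch'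
        exact this
      · have h1 : (s :: l').getLast? = some v := by
          rw [hL', hlast, List.getLast?_eq_getLast_of_ne_nil (List.cons_ne_nil s l), hl.2]
        have h2 := List.getLast?_eq_getLast_of_ne_nil (List.cons_ne_nil s l')
        rw [h2] at h1
        exact Option.some_injective _ h1
    -- length bound
    have hlen : (l'.length : ℝ) ≤ n := by
      have h1 : L'.length ≤ n := by
        simpa using List.Nodup.length_le_card hnd
      have h2 : l'.length + 1 = L'.length := by rw [← hL']; rfl
      have : l'.length ≤ n := by omega
      exact_mod_cast this
    -- apply optimality of tree path w.r.t. reweighted weights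
    have hopt := hT v l' hwalk
    have htel1 := AuxSSSP.telescope wR p ε (tpath v) s
    have htel2 := AuxSSSP.telescope wR p ε l' s
    have hv1 : (s :: tpath v).getLast (List.cons_ne_nil _ _) = v := (htree v).1.2
    have hv2 : (s :: l').getLast (List.cons_ne_nil _ _) = v := hwalk.2
    rw [hv1] at htel1
    rw [hv2] at htel2
    have hopt' : walkWeight (fun e => wR e + p e.1 - p e.2 + ε) s (tpath v)
        ≤ walkWeight (fun e => wR e + p e.1 - p e.2 + ε) s l' := hopt
    rw [htel1, htel2] at hopt'
    -- weight of shortened walk ≤ weight of original walk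
    have hWW : walkWeight wR s l' ≤ walkWeight wR s l := by
      rw [AuxSSSP.walkWeight_eq_pairs, AuxSSSP.walkWeight_eq_pairs, hL']
      exact hW
    have htpos : (0 : ℝ) ≤ (tpath v).length := by positivity
    nlinarith [mul_le_mul_of_nonneg_left hlen hε]
  have := le_csInf hSne hlb
  linarith
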